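/- Let β ∈ L^∞[0,∞) admit bounded zero-Cesàro-mean iterated primitives β⁽⁻¹⁾ and β⁽⁻²⁾. Let K : ℝ → ℝ be C² with support in [0,k] and K(0)=K(k)=K'(0)=K'(k)=0, and let s : ℝ → ℝ be piecewise AC¹ (differentiable with piecewise absolutely continuous derivative, finitely many jump points of s' in any bounded interval). Then for each fixed t ≥ 0, I_N(t) := ∫_ℝ β(Nσ) s(σ) K(t−σ) dσ = O(1/N²), i.e. there is a constant C (independent of N) with |I_N(t)| ≤ C/N² for all N ≥ 1. -/

import Mathlib

open MeasureTheory Filter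

open MeasureTheory Filter Set intervalIntegral

private lemma bdd_intervalIntegrable {g : ℝ → ℝ} (hm : Measurable g) {C : ℝ}
    (hb : ∀ x, |g x| ≤ C) (a b : ℝ) : IntervalIntegrable g volume a b := by
  refine IntegrableOn.intervalIntegrable ?_
  refine Integrable.mono' (g := fun _ : ℝ => C)
    (integrableOn_const isCompact_uIcc.measure_lt_top.ne)
    hm.aestronglyMeasurable.restrict
    (ae_of_all _ fun x => by simpa using hb x)

private lemma rep_continuous {u U : ℝ → ℝ}
    (hu : ∀ a b : ℝ, IntervalIntegrable u volume a b)
    (hU : ∀ x y : ℝ, x ≤ y → U y = U x + ∫ σ in x..y, u σ) : Continuous U := by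
  have h0 : ∀ y : ℝ, U y = U 0 + ∫ σ in (0:ℝ)..y, u σ := by
    intro y
    rcases le_total 0 y with h | h
    · exact hU 0 y h
    · have h1 := hU y 0 h
      have h2 : (∫ σ in (0:ℝ)..y, u σ) = -∫ σ in y..(0:ℝ), u σ :=
        intervalIntegral.integral_symm y 0
      linarith
  rw [show U = fun y => U 0 + ∫ σ in (0:ℝ)..y, u σ from funext h0]
  exact continuous_const.add (intervalIntegral.continuous_primitive hu 0)

private lemma glue_rep (J : Set ℝ) (hJ : ∀ a b : ℝ, (J ∩ Set.Icc a b).Finite)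
    (F G : ℝ → ℝ) (hint : ∀ a b : ℝ, IntervalIntegrable G volume a b)
    (hbase : ∀ x y : ℝ, x ≤ y → Set.Ioo x y ∩ J = ∅ → F y = F x + ∫ σ in x..y, G σ) :
    ∀ x y : ℝ, x ≤ y → F y = F x + ∫ σ in x..y, G σ := by
  have hfin : ∀ x y : ℝ, (J ∩ Set.Ioo x y).Finite := fun x y =>
    (hJ x y).subset (inter_subset_inter_right _ Ioo_subset_Icc_self)
  have key : ∀ n : ℕ, ∀ x y : ℝ, x ≤ y → (J ∩ Set.Ioo x y).ncard ≤ n →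
      F y = F x + ∫ σ in x..y, G σ := by
    intro n
    induction n with
    | zero =>
      intro x y hxy hcard
      have he : J ∩ Set.Ioo x y = ∅ :=
        (Set.ncard_eq_zero (hfin x y)).mp (Nat.le_zero.mp hcard)
      exact hbase x y hxy (by rw [inter_comm]; exact he)
    | succ n ih =>
      intro x y hxy hcard
      by_cases hemp : J ∩ Set.Ioo x y = ∅
      · exact hbase x y hxy (by rw [inter_comm]; exact hemp)
      · obtain ⟨j, hj⟩ := Set.nonempty_iff_ne_empty.mpr hemp
        have hjx : x < j := hj.2.1
        have hjy : j < y := hj.2.2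
        have hdlt : ((J ∩ Set.Ioo x y) \ {j}).ncard < (J ∩ Set.Ioo x y).ncard :=
          Set.ncard_diff_singleton_lt_of_mem hj (hfin x y)
        have hs1 : J ∩ Set.Ioo x j ⊆ (J ∩ Set.Ioo x y) \ {j} := by
          intro z hz
          exact ⟨⟨hz.1, hz.2.1, hz.2.2.trans hjy⟩, fun hzz => absurd (hzz ▸ hz.2.2) (lt_irrefl j)⟩
        have hs2 : J ∩ Set.Ioo j y ⊆ (J ∩ Set.Ioo x y) \ {j} := by
          intro z hz
          exact ⟨⟨hz.1, hjx.trans hz.2.1, hz.2.2⟩, fun hzz => absurd (hzz ▸ hz.2.1) (lt_irrefl j)⟩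
        have hc1 : (J ∩ Set.Ioo x j).ncard ≤ n := by
          have := Set.ncard_le_ncard hs1 (((hfin x y)).diff)
          omega
        have hc2 : (J ∩ Set.Ioo j y).ncard ≤ n := by
          have := Set.ncard_le_ncard hs2 (((hfin x y)).diff)
          omega
        have e1 := ih x j hjx.le hc1
        have e2 := ih j y hjy.le hc2
        have e3 := intervalIntegral.integral_add_adjacent_intervals
          (hint x j) (hint j y)
        linarith
  intro x y hxy
  exact key (J ∩ Set.Ioo x y).ncard x y hxy le_rfl

private lemma ibp_core (h φ H f : ℝ → ℝ) (a b : ℝ) (hab : a ≤ b)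
    (hh : IntervalIntegrable h volume a b) (hφ : IntervalIntegrable φ volume a b)
    (hH : ∀ y, a ≤ y → y ≤ b → H y = H a + ∫ u in a..y, h u)
    (hf : ∀ y, a ≤ y → y ≤ b → f y = f a + ∫ u in a..y, φ u) :
    ∫ σ in a..b, h σ * f σ = H b * f b - H a * f a - ∫ σ in a..b, φ σ * H σ := by
  set μ : Measure ℝ := volume.restrict (Set.Ioc a b) with hμ
  set P : ℝ → ℝ := fun y => ∫ u in a..y, φ u with hPdef
  set Q : ℝ → ℝ := fun y => ∫ u in a..y, h u with hQdef
  have hPc : ContinuousOn P (Set.Icc a b) := by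
    have := intervalIntegral.continuousOn_primitive_interval
      (f := φ) (a := a) (b := b)
      (by rw [uIcc_of_le hab]; exact (intervalIntegrable_iff_integrableOn_Icc_of_le hab).mp hφ)
    rwa [uIcc_of_le hab] at this
  have hQc : ContinuousOn Q (Set.Icc a b) := by
    have := intervalIntegral.continuousOn_primitive_interval
      (f := h) (a := a) (b := b)
      (by rw [uIcc_of_le hab]; exact (intervalIntegrable_iff_integrableOn_Icc_of_le hab).mp hh)
    rwa [uIcc_of_le hab] at this
  have hPii : IntervalIntegrable (fun σ => h σ * P σ) volume a b :=
    hh.mul_continuousOn (by rwa [uIcc_of_le hab])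
  have e1 : ∫ σ in a..b, h σ * f σ
      = (∫ σ in a..b, h σ * f a) + ∫ σ in a..b, h σ * P σ := by
    rw [← intervalIntegral.integral_add (hh.mul_const (f a)) hPii]
    apply intervalIntegral.integral_congr
    intro σ hσ
    rw [uIcc_of_le hab] at hσ
    show h σ * f σ = h σ * f a + h σ * P σ
    rw [hf σ hσ.1 hσ.2]
    ring
  have e2 : (∫ σ in a..b, h σ * f a) = Q b * f a := by
    rw [intervalIntegral.integral_mul_const]
  -- Fubini step
  have hFeq : (fun p : ℝ × ℝ => h p.1 * (Set.Ioc a p.1).indicator φ p.2)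
      = Set.indicator {p : ℝ × ℝ | a < p.2 ∧ p.2 ≤ p.1} (fun p => h p.1 * φ p.2) := by
    funext p
    simp only [Set.indicator_apply, Set.mem_Ioc, Set.mem_setOf_eq]
    by_cases hp : a < p.2 ∧ p.2 ≤ p.1
    · rw [if_pos hp, if_pos hp]
    · rw [if_neg hp, if_neg hp, mul_zero]
  have hEmeas : MeasurableSet {p : ℝ × ℝ | a < p.2 ∧ p.2 ≤ p.1} := by
    apply MeasurableSet.inter
    · exact measurable_snd measurableSet_Ioi
    · exact (isClosed_le continuous_snd continuous_fst).measurableSet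
  have hFint : Integrable (fun p : ℝ × ℝ => h p.1 * (Set.Ioc a p.1).indicator φ p.2)
      (μ.prod μ) := by
    rw [hFeq]
    exact (Integrable.mul_prod hh.1 hφ.1).indicator hEmeas
  have swap := MeasureTheory.integral_integral_swap
    (f := fun σ u => h σ * (Set.Ioc a σ).indicator φ u) (μ := μ) (ν := μ) (by exact hFint)
  have lhs_eq : (∫ σ, ∫ u, h σ * (Set.Ioc a σ).indicator φ u ∂μ ∂μ)
      = ∫ σ in a..b, h σ * P σ := by
    rw [intervalIntegral.integral_of_le hab]
    apply MeasureTheory.setIntegral_congr_fun measurableSet_Ioc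
    intro σ hσ
    show (∫ u, h σ * (Set.Ioc a σ).indicator φ u ∂μ) = h σ * P σ
    rw [MeasureTheory.integral_const_mul, MeasureTheory.setIntegral_indicator measurableSet_Ioc,
      Set.inter_eq_self_of_subset_right (Set.Ioc_subset_Ioc_right hσ.2)]
    rw [hPdef]
    show h σ * (∫ u in Set.Ioc a σ, φ u) = h σ * ∫ u in a..σ, φ u
    rw [intervalIntegral.integral_of_le hσ.1.le]
  have rhs_eq : (∫ u, ∫ σ, h σ * (Set.Ioc a σ).indicator φ u ∂μ ∂μ)
      = ∫ u in Set.Ioc a b, φ u * (Q b - Q u) := by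
    apply MeasureTheory.setIntegral_congr_fun measurableSet_Ioc
    intro u hu
    show (∫ σ, h σ * (Set.Ioc a σ).indicator φ u ∂μ) = φ u * (Q b - Q u)
    have step1 : (fun σ => h σ * (Set.Ioc a σ).indicator φ u)
        = fun σ => (Set.Ici u).indicator (fun σ' => h σ' * φ u) σ := by
      funext σ
      simp only [Set.indicator_apply, Set.mem_Ioc, Set.mem_Ici]
      by_cases hσu : u ≤ σ
      · rw [if_pos hσu, if_pos ⟨hu.1, hσu⟩]
      · rw [if_neg hσu, if_neg (fun hc => hσu hc.2), mul_zero]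
    rw [step1, MeasureTheory.setIntegral_indicator measurableSet_Ici]
    have hset : Set.Ioc a b ∩ Set.Ici u = Set.Icc u b := by
      ext z
      simp only [Set.mem_inter_iff, Set.mem_Ioc, Set.mem_Ici, Set.mem_Icc]
      constructor
      · rintro ⟨⟨_, hz2⟩, hz3⟩; exact ⟨hz3, hz2⟩
      · rintro ⟨hz1, hz2⟩; exact ⟨⟨lt_of_lt_of_le hu.1 hz1, hz2⟩, hz1⟩
    rw [hset, MeasureTheory.integral_mul_const, MeasureTheory.integral_Icc_eq_integral_Ioc]
    have hQsplit : (∫ σ in Set.Ioc u b, h σ) = Q b - Q u := by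
      have hi1 : IntervalIntegrable h volume a u :=
        hh.mono_set (by rw [uIcc_of_le hab, uIcc_of_le hu.1.le]; exact Icc_subset_Icc le_rfl hu.2)
      have hi2 : IntervalIntegrable h volume u b :=
        hh.mono_set (by rw [uIcc_of_le hab, uIcc_of_le hu.2]; exact Icc_subset_Icc hu.1.le le_rfl)
      have hadj := intervalIntegral.integral_add_adjacent_intervals hi1 hi2
      rw [← intervalIntegral.integral_of_le hu.2]
      show (∫ σ in u..b, h σ) = (∫ v in a..b, h v) - ∫ v in a..u, h v
      linarith
    rw [hQsplit]
    ring
  have e3 : (∫ σ in a..b, h σ * P σ) = ∫ u in Set.Ioc a b, φ u * (Q b - Q u) := by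
    rw [← lhs_eq, ← rhs_eq]
    exact swap
  have hφQii : IntervalIntegrable (fun u => φ u * Q u) volume a b :=
    hφ.mul_continuousOn (by rwa [uIcc_of_le hab])
  have e4 : (∫ u in Set.Ioc a b, φ u * (Q b - Q u)) = Q b * P b - ∫ u in a..b, φ u * Q u := by
    rw [← intervalIntegral.integral_of_le hab]
    have estep : (∫ u in a..b, φ u * (Q b - Q u))
        = (∫ u in a..b, φ u * Q b) - ∫ u in a..b, φ u * Q u := by
      rw [← intervalIntegral.integral_sub (hφ.mul_const (Q b)) hφQii]
      apply intervalIntegral.integral_congr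
      intro u _
      show φ u * (Q b - Q u) = φ u * Q b - φ u * Q u
      ring
    rw [estep, intervalIntegral.integral_mul_const]
    have : P b = ∫ u in a..b, φ u := rfl
    rw [this]
    ring
  have hHb : H b = H a + Q b := hH b hab le_rfl
  have hfb : f b = f a + P b := hf b hab le_rfl
  have e5 : (∫ σ in a..b, φ σ * H σ)
      = (∫ σ in a..b, φ σ * H a) + ∫ σ in a..b, φ σ * Q σ := by
    rw [← intervalIntegral.integral_add (hφ.mul_const (H a)) hφQii]
    apply intervalIntegral.integral_congr
    intro σ hσ
    rw [uIcc_of_le hab] at hσ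
    show φ σ * H σ = φ σ * H a + φ σ * Q σ
    rw [hH σ hσ.1 hσ.2]
    ring
  rw [e1, e2, e3, e4, e5, intervalIntegral.integral_mul_const, hHb, hfb]
  ring

private lemma ibp_rep {u v U V : ℝ → ℝ} {a b : ℝ} (hab : a ≤ b)
    (hu : IntervalIntegrable u volume a b) (hv : IntervalIntegrable v volume a b)
    (hU : ∀ x y : ℝ, x ≤ y → U y = U x + ∫ σ in x..y, u σ)
    (hV : ∀ x y : ℝ, x ≤ y → V y = V x + ∫ σ in x..y, v σ) :
    ∫ σ in a..b, u σ * V σ = U b * V b - U a * V a - ∫ σ in a..b, v σ * U σ :=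
  ibp_core u v U V a b hab hu hv (fun y hy _ => hU a y hy) (fun y hy _ => hV a y hy)

private lemma prod_rep {u v U V : ℝ → ℝ}
    (hu : ∀ a b : ℝ, IntervalIntegrable u volume a b)
    (hv : ∀ a b : ℝ, IntervalIntegrable v volume a b)
    (hU : ∀ x y : ℝ, x ≤ y → U y = U x + ∫ σ in x..y, u σ)
    (hV : ∀ x y : ℝ, x ≤ y → V y = V x + ∫ σ in x..y, v σ) :
    ∀ x y : ℝ, x ≤ y →
      U y * V y = U x * V x + ∫ σ in x..y, (u σ * V σ + v σ * U σ) := by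
  intro x y hxy
  have hUc : Continuous U := rep_continuous hu hU
  have hVc : Continuous V := rep_continuous hv hV
  have h1 := ibp_rep hxy (hu x y) (hv x y) hU hV
  have hint1 : IntervalIntegrable (fun σ => u σ * V σ) volume x y :=
    (hu x y).mul_continuousOn hVc.continuousOn
  have hint2 : IntervalIntegrable (fun σ => v σ * U σ) volume x y :=
    (hv x y).mul_continuousOn hUc.continuousOn
  rw [intervalIntegral.integral_add hint1 hint2]
  linarith
/-- Error estimate for a second-order CT-ΣΔ modulator with a piecewise AC¹
input envelope `s` (jump set `J`, locally finite): `I_N(t) = O(1/N²)`. -/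
theorem error_estimate_piecewise_AC1
    (β B1 B2 : ℝ → ℝ)
    (hβm : Measurable β) (hβb : ∃ M : ℝ, ∀ t : ℝ, |β t| ≤ M)
    (hB1 : ∀ t : ℝ, B1 t = B1 0 + ∫ σ in (0:ℝ)..t, β σ)
    (hB1b : ∃ M : ℝ, ∀ t : ℝ, |B1 t| ≤ M)
    (hB1mean : Tendsto (fun T : ℝ => (1 / T) * ∫ t in (0:ℝ)..T, B1 t) atTop (nhds 0))
    (hB2 : ∀ t : ℝ, B2 t = B2 0 + ∫ σ in (0:ℝ)..t, B1 σ)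
    (hB2b : ∃ M : ℝ, ∀ t : ℝ, |B2 t| ≤ M)
    (hB2mean : Tendsto (fun T : ℝ => (1 / T) * ∫ t in (0:ℝ)..T, B2 t) atTop (nhds 0))
    (k : ℝ) (hk : 0 < k)
    (K : ℝ → ℝ) (hK : ContDiff ℝ 2 K)
    (hKsupp : Function.support K ⊆ Set.Icc 0 k)
    (hK0 : K 0 = 0) (hKk : K k = 0)
    (hK'0 : deriv K 0 = 0) (hK'k : deriv K k = 0)
    (s : ℝ → ℝ) (hs : Continuous s)
    (J : Set ℝ) (hJ : ∀ a b : ℝ, (J ∩ Set.Icc a b).Finite)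
    (s' s'' : ℝ → ℝ)
    (hderiv : ∀ x : ℝ, x ∉ J → HasDerivAt s (s' x) x)
    (hs'' : MeasureTheory.LocallyIntegrable s'')
    (hAC : ∀ x y : ℝ, x ≤ y → Set.Ioo x y ∩ J = ∅ →
      s' y = s' x + ∫ σ in x..y, s'' σ)
    (t : ℝ) (ht : 0 ≤ t) :
    ∃ C : ℝ, ∀ N : ℝ, 1 ≤ N →
      |∫ σ : ℝ, β (N * σ) * s σ * K (t - σ)| ≤ C / N ^ 2 := by
  obtain ⟨M0, hM0⟩ := hβb
  obtain ⟨M2, hM2⟩ := hB2b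
  have hM2nn : 0 ≤ M2 := le_trans (abs_nonneg _) (hM2 0)
  set a : ℝ := t - k with hadef
  set b : ℝ := t with hbdef
  have hab : a ≤ b := by rw [hadef, hbdef]; linarith
  -- regularity of K
  have hKd : Differentiable ℝ K := hK.differentiable two_ne_zero
  have hK1 : ContDiff ℝ 1 (deriv K) := by
    have h2 : ContDiff ℝ (1 + 1 : ℕ) K := by norm_num; exact hK
    exact (contDiff_succ_iff_deriv.mp h2).2.2
  have hK1c : Continuous (deriv K) := hK.continuous_deriv one_le_two
  have hK2c : Continuous (deriv (deriv K)) := hK1.continuous_deriv le_rfl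
  -- shifted kernels
  set Kt : ℝ → ℝ := fun σ => K (t - σ) with hKtdef
  set Kt1 : ℝ → ℝ := fun σ => -deriv K (t - σ) with hKt1def
  set Kt2 : ℝ → ℝ := fun σ => deriv (deriv K) (t - σ) with hKt2def
  have hKtc : Continuous Kt := hKd.continuous.comp (continuous_const.sub continuous_id)
  have hKt1c : Continuous Kt1 := (hK1c.comp (continuous_const.sub continuous_id)).neg
  have hKt2c : Continuous Kt2 := hK2c.comp (continuous_const.sub continuous_id)
  have hKtd : ∀ σ : ℝ, HasDerivAt Kt (Kt1 σ) σ := by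
    intro σ
    have h1 : HasDerivAt (fun σ : ℝ => t - σ) (-1) σ := (hasDerivAt_id σ).const_sub t
    have h2 := ((hKd (t - σ)).hasDerivAt).comp σ h1
    have : deriv K (t - σ) * (-1) = Kt1 σ := by rw [hKt1def]; ring
    rw [this] at h2
    exact h2
  have hKt1d : ∀ σ : ℝ, HasDerivAt Kt1 (Kt2 σ) σ := by
    intro σ
    have h1 : HasDerivAt (fun σ : ℝ => t - σ) (-1) σ := (hasDerivAt_id σ).const_sub t
    have h2 := (((hK1.differentiable one_ne_zero) (t - σ)).hasDerivAt).comp σ h1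
    have h3 := h2.neg
    have : -(deriv (deriv K) (t - σ) * (-1)) = Kt2 σ := by rw [hKt2def]; ring
    rw [this] at h3
    exact h3
  have hKtrep : ∀ x y : ℝ, x ≤ y → Kt y = Kt x + ∫ σ in x..y, Kt1 σ := by
    intro x y _
    have := intervalIntegral.integral_eq_sub_of_hasDerivAt
      (f := Kt) (f' := Kt1) (fun σ _ => hKtd σ) (hKt1c.intervalIntegrable x y)
    linarith
  have hKt1rep : ∀ x y : ℝ, x ≤ y → Kt1 y = Kt1 x + ∫ σ in x..y, Kt2 σ := by
    intro x y _
    have := intervalIntegral.integral_eq_sub_of_hasDerivAt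
      (f := Kt1) (f' := Kt2) (fun σ _ => hKt1d σ) (hKt2c.intervalIntegrable x y)
    linarith
  -- s'' integrability
  have hs''ii : ∀ x y : ℝ, IntervalIntegrable s'' volume x y := fun x y =>
    (hs''.integrableOn_isCompact isCompact_uIcc).intervalIntegrable
  -- s' is globally AC (glue over jump points)
  have hs'rep : ∀ x y : ℝ, x ≤ y → s' y = s' x + ∫ σ in x..y, s'' σ :=
    glue_rep J hJ s' s'' hs''ii hAC
  have hs'c : Continuous s' := rep_continuous hs''ii hs'rep
  have hs'ii : ∀ x y : ℝ, IntervalIntegrable s' volume x y := fun x y =>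
    hs'c.intervalIntegrable x y
  -- s is globally a primitive of s'
  have hsrep : ∀ x y : ℝ, x ≤ y → s y = s x + ∫ σ in x..y, s' σ := by
    apply glue_rep J hJ s s' hs'ii
    intro x y hxy hempty
    have hFTC := intervalIntegral.integral_eq_sub_of_hasDeriv_right
      (f := s) (f' := s') (a := x) (b := y)
      (hs.continuousOn)
      (by
        intro z hz
        rw [min_eq_left hxy, max_eq_right hxy] at hz
        have hzJ : z ∉ J := fun hzJ => by
          rw [Set.eq_empty_iff_forall_notMem] at hempty
          exact hempty z ⟨hz, hzJ⟩
        exact (hderiv z hzJ).hasDerivWithinAt)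
      (hs'ii x y)
    linarith
  -- the test function and its derivatives
  set f : ℝ → ℝ := fun σ => s σ * Kt σ with hfdef
  set φ : ℝ → ℝ := fun σ => s' σ * Kt σ + Kt1 σ * s σ with hφdef
  set ψ : ℝ → ℝ := fun σ =>
    (s'' σ * Kt σ + Kt1 σ * s' σ) + (Kt2 σ * s σ + s' σ * Kt1 σ) with hψdef
  have hfrep : ∀ x y : ℝ, x ≤ y → f y = f x + ∫ σ in x..y, φ σ :=
    prod_rep hs'ii (fun x y => hKt1c.intervalIntegrable x y) hsrep hKtrep
  have hφc : Continuous φ := (hs'c.mul hKtc).add (hKt1c.mul hs)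
  have hψii : ∀ x y : ℝ, IntervalIntegrable ψ volume x y := by
    intro x y
    exact (((hs''ii x y).mul_continuousOn hKtc.continuousOn).add
      ((hKt1c.mul hs'c).intervalIntegrable x y)).add
      (((hKt2c.mul hs).add (hs'c.mul hKt1c)).intervalIntegrable x y)
  have hφrep : ∀ x y : ℝ, x ≤ y → φ y = φ x + ∫ σ in x..y, ψ σ := by
    intro x y hxy
    have rep1 := prod_rep hs''ii (fun x y => hKt1c.intervalIntegrable x y)
      hs'rep hKtrep x y hxy
    have rep2 := prod_rep (fun x y => hKt2c.intervalIntegrable x y) hs'ii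
      hKt1rep hsrep x y hxy
    have hint1 : IntervalIntegrable (fun σ => s'' σ * Kt σ + Kt1 σ * s' σ) volume x y :=
      ((hs''ii x y).mul_continuousOn hKtc.continuousOn).add
        ((hKt1c.mul hs'c).intervalIntegrable x y)
    have hint2 : IntervalIntegrable (fun σ => Kt2 σ * s σ + s' σ * Kt1 σ) volume x y :=
      ((hKt2c.mul hs).add (hs'c.mul hKt1c)).intervalIntegrable x y
    have hsum := intervalIntegral.integral_add hint1 hint2
    rw [hφdef, hψdef]
    show s' y * Kt y + Kt1 y * s y = s' x * Kt x + Kt1 x * s x + _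
    rw [hsum]
    linarith
  -- boundary values vanish
  have hKta : Kt a = 0 := by rw [hKtdef]; show K (t - a) = 0; rw [hadef]; norm_num [hbdef, hKk]
  have hKtb : Kt b = 0 := by rw [hKtdef]; show K (t - b) = 0; rw [hbdef]; norm_num [hK0]
  have hKt1a : Kt1 a = 0 := by
    rw [hKt1def]; show -deriv K (t - a) = 0; rw [hadef]
    norm_num [hbdef, hK'k]
  have hKt1b : Kt1 b = 0 := by
    rw [hKt1def]; show -deriv K (t - b) = 0; rw [hbdef]
    norm_num [hK'0]
  have hfa : f a = 0 := by rw [hfdef]; show s a * Kt a = 0; rw [hKta, mul_zero]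
  have hfb : f b = 0 := by rw [hfdef]; show s b * Kt b = 0; rw [hKtb, mul_zero]
  have hφa : φ a = 0 := by
    rw [hφdef]; show s' a * Kt a + Kt1 a * s a = 0; rw [hKta, hKt1a]; ring
  have hφb : φ b = 0 := by
    rw [hφdef]; show s' b * Kt b + Kt1 b * s b = 0; rw [hKtb, hKt1b]; ring
  -- the constant
  refine ⟨(∫ σ in a..b, |ψ σ|) * M2, ?_⟩
  intro N hN
  have hNpos : (0:ℝ) < N := lt_of_lt_of_le one_pos hN
  have hN0 : N ≠ 0 := ne_of_gt hNpos
  have hN2pos : (0:ℝ) < N ^ 2 := by positivity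
  -- scaled primitives
  set h : ℝ → ℝ := fun σ => β (N * σ) with hhdef
  set G1 : ℝ → ℝ := fun σ => B1 (N * σ) / N with hG1def
  set G2 : ℝ → ℝ := fun σ => B2 (N * σ) / N ^ 2 with hG2def
  have hhm : Measurable h := hβm.comp (measurable_id.const_mul N)
  have hhb : ∀ x : ℝ, |h x| ≤ M0 := fun x => hM0 (N * x)
  have hhii : ∀ x y : ℝ, IntervalIntegrable h volume x y :=
    fun x y => bdd_intervalIntegrable hhm hhb x y
  have hβii : ∀ x y : ℝ, IntervalIntegrable β volume x y :=
    fun x y => bdd_intervalIntegrable hβm hM0 x y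
  have hB1c : Continuous B1 := by
    rw [show B1 = fun y => B1 0 + ∫ σ in (0:ℝ)..y, β σ from funext hB1]
    exact continuous_const.add (intervalIntegral.continuous_primitive hβii 0)
  have hB1ii : ∀ x y : ℝ, IntervalIntegrable B1 volume x y :=
    fun x y => hB1c.intervalIntegrable x y
  have hG1c : Continuous G1 := by
    rw [hG1def]
    exact (hB1c.comp (continuous_const.mul continuous_id)).div_const N
  have hG1rep : ∀ x y : ℝ, x ≤ y → G1 y = G1 x + ∫ σ in x..y, h σ := by
    intro x y _
    have e1 : (∫ σ in x..y, h σ) = N⁻¹ • ∫ σ in (N*x)..(N*y), β σ := by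
      rw [hhdef]
      exact intervalIntegral.integral_comp_mul_left (a := x) (b := y) β hN0
    have e2 := intervalIntegral.integral_add_adjacent_intervals
      (a := 0) (b := N*x) (c := N*y) (hβii 0 (N*x)) (hβii (N*x) (N*y))
    have e3 := hB1 (N*x)
    have e4 := hB1 (N*y)
    rw [hG1def]
    show B1 (N * y) / N = B1 (N * x) / N + ∫ σ in x..y, h σ
    rw [e1, smul_eq_mul]
    field_simp
    linarith
  have hG2rep : ∀ x y : ℝ, x ≤ y → G2 y = G2 x + ∫ σ in x..y, G1 σ := by
    intro x y _
    have e1 : (∫ σ in x..y, G1 σ) = (N⁻¹ • ∫ σ in (N*x)..(N*y), B1 σ) / N := by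
      rw [hG1def]
      show (∫ σ in x..y, B1 (N * σ) / N) = _
      rw [intervalIntegral.integral_div]
      rw [intervalIntegral.integral_comp_mul_left (a := x) (b := y) B1 hN0]
    have e2 := intervalIntegral.integral_add_adjacent_intervals
      (a := 0) (b := N*x) (c := N*y) (hB1ii 0 (N*x)) (hB1ii (N*x) (N*y))
    have e3 := hB2 (N*x)
    have e4 := hB2 (N*y)
    have key : B2 (N * y) = B2 (N * x) + ∫ σ in (N*x)..(N*y), B1 σ := by linarith
    rw [hG2def]
    show B2 (N * y) / N ^ 2 = B2 (N * x) / N ^ 2 + ∫ σ in x..y, G1 σ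
    rw [e1, smul_eq_mul, key]
    field_simp
  -- the two integrations by parts
  have E1 := ibp_rep hab (hhii a b) ((hφc.intervalIntegrable a b)) hG1rep hfrep
  have E2 := ibp_rep hab ((hG1c.intervalIntegrable a b)) (hψii a b) hG2rep hφrep
  have Ecomm : (∫ σ in a..b, φ σ * G1 σ) = ∫ σ in a..b, G1 σ * φ σ :=
    intervalIntegral.integral_congr (fun σ _ => mul_comm _ _)
  have Emain : (∫ σ in a..b, h σ * f σ) = ∫ σ in a..b, ψ σ * G2 σ := by
    rw [E1, Ecomm, E2, hfa, hfb, hφa, hφb]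
    ring
  -- reduce the full-line integral to the interval
  have hsupp : ∀ σ : ℝ, σ ∉ Set.Icc a b → β (N * σ) * s σ * K (t - σ) = 0 := by
    intro σ hσ
    have hKz : K (t - σ) = 0 := by
      by_contra hKnz
      have := hKsupp (Function.mem_support.mpr hKnz)
      apply hσ
      constructor
      · rw [hadef]; linarith [this.2]
      · rw [hbdef]; linarith [this.1]
    rw [hKz, mul_zero]
  have hred : (∫ σ : ℝ, β (N * σ) * s σ * K (t - σ)) = ∫ σ in a..b, h σ * f σ := by
    rw [← MeasureTheory.setIntegral_eq_integral_of_forall_compl_eq_zero hsupp]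
    rw [MeasureTheory.integral_Icc_eq_integral_Ioc, ← intervalIntegral.integral_of_le hab]
    apply intervalIntegral.integral_congr
    intro σ _
    show β (N * σ) * s σ * K (t - σ) = h σ * f σ
    rw [hhdef, hfdef, hKtdef]
    show β (N * σ) * s σ * K (t - σ) = β (N * σ) * (s σ * K (t - σ))
    ring
  -- final estimate
  have hG2bd : ∀ σ : ℝ, |G2 σ| ≤ M2 / N ^ 2 := by
    intro σ
    rw [hG2def]
    show |B2 (N * σ) / N ^ 2| ≤ M2 / N ^ 2
    rw [abs_div, abs_of_pos hN2pos]
    gcongr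
    exact hM2 (N * σ)
  have hbound : |∫ σ in a..b, ψ σ * G2 σ| ≤ (∫ σ in a..b, |ψ σ|) * M2 / N ^ 2 := by
    have hgii : IntervalIntegrable (fun σ => |ψ σ| * (M2 / N ^ 2)) volume a b := by
      have := (hψii a b).norm
      simp only [Real.norm_eq_abs] at this
      exact this.mul_const _
    have hle := intervalIntegral.norm_integral_le_of_norm_le
      (f := fun σ => ψ σ * G2 σ) (g := fun σ => |ψ σ| * (M2 / N ^ 2))
      hab (Filter.Eventually.of_forall (fun τ _ => by
        rw [Real.norm_eq_abs, abs_mul]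
        exact mul_le_mul_of_nonneg_left (hG2bd τ) (abs_nonneg _)))
      hgii
    rw [Real.norm_eq_abs] at hle
    have heval : (∫ σ in a..b, |ψ σ| * (M2 / N ^ 2))
        = (∫ σ in a..b, |ψ σ|) * (M2 / N ^ 2) := intervalIntegral.integral_mul_const _ _
    have hnn : 0 ≤ (∫ σ in a..b, |ψ σ|) * (M2 / N ^ 2) := by
      apply mul_nonneg
      · exact intervalIntegral.integral_nonneg hab (fun σ _ => abs_nonneg _)
      · positivity
    calc |∫ σ in a..b, ψ σ * G2 σ| ≤ |∫ σ in a..b, |ψ σ| * (M2 / N ^ 2)| := hle.trans (le_abs_self _)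
      _ = (∫ σ in a..b, |ψ σ|) * (M2 / N ^ 2) := by rw [heval, abs_of_nonneg hnn]
      _ = (∫ σ in a..b, |ψ σ|) * M2 / N ^ 2 := by ring
  rw [hred, Emain]
  exact hbound
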